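/- arXiv:nlin/0406062 — 2 statements merged into one kernel-verified Lean document; each statement's English description precedes it below -/
import Mathlib

section
/- Let T be a bounded operator on a Hilbert space with operator norm ‖T‖ < 1, and let n* = min{n ∈ ℕ₊ : ‖Tⁿ‖ < e⁻¹} (which exists). Then for any λ ∈ ℂ with |λ| = 1 the resolvent satisfies ‖(λ - T)⁻¹‖ (1 - e⁻¹) ≤ n*. -/
open Real

/-- Lower bound for the dissipation time via the resolvent: if `T` is a bounded
operator on a complex Hilbert space with `‖T‖ < 1`, `n` is the dissipation time
(the least positive integer with `‖Tⁿ‖ < e⁻¹`), `λ` is on the unit circle and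
`R` is the resolvent `(λ - T)⁻¹`, then `‖R‖ (1 - e⁻¹) ≤ n`. -/
theorem resolvent_lower_bound_dissipation_time
    {H : Type*} [NormedAddCommGroup H] [InnerProductSpace ℂ H] [CompleteSpace H]
    (T : H →L[ℂ] H) (hT : ‖T‖ < 1)
    (n : ℕ) (hn : 0 < n) (hdiss : ‖T ^ n‖ < Real.exp (-1))
    (hmin : ∀ m : ℕ, 0 < m → m < n → Real.exp (-1) ≤ ‖T ^ m‖)
    (lam : ℂ) (hlam : ‖lam‖ = 1)
    (R : H →L[ℂ] H)
    (hR1 : (lam • (1 : H →L[ℂ] H) - T) * R = 1)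
    (hR2 : R * (lam • (1 : H →L[ℂ] H) - T) = 1) :
    ‖R‖ * (1 - Real.exp (-1)) ≤ n := by
  have hlam0 : lam ≠ 0 := by
    intro h; rw [h] at hlam; simp at hlam
  have hlaminv : ‖lam⁻¹‖ = 1 := by rw [norm_inv, hlam]; norm_num
  set S : H →L[ℂ] H := ∑ k ∈ Finset.range n, (lam⁻¹) ^ (k + 1) • T ^ k with hS
  have key : (lam • (1 : H →L[ℂ] H) - T) * S = 1 - (lam⁻¹) ^ n • T ^ n := by
    rw [hS, Finset.mul_sum]
    have hterm : ∀ k ∈ Finset.range n,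
        (lam • (1 : H →L[ℂ] H) - T) * ((lam⁻¹) ^ (k + 1) • T ^ k)
        = (lam⁻¹) ^ k • T ^ k - (lam⁻¹) ^ (k + 1) • T ^ (k + 1) := by
      intro k _
      rw [sub_mul, smul_mul_assoc, one_mul, mul_smul_comm, smul_smul]
      congr 2
      · field_simp
        ring_nf
        rw [mul_inv_cancel₀ hlam0, one_mul]
      · rw [pow_succ']
    rw [Finset.sum_congr rfl hterm, Finset.sum_range_sub']
    simp
  have hS_eq : S = R - (lam⁻¹) ^ n • (R * T ^ n) := by
    calc S = R * ((lam • (1 : H →L[ℂ] H) - T) * S) := by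
          rw [← mul_assoc, hR2, one_mul]
      _ = R * (1 - (lam⁻¹) ^ n • T ^ n) := by rw [key]
      _ = R - (lam⁻¹) ^ n • (R * T ^ n) := by rw [mul_sub, mul_one, mul_smul_comm]
  have hR_eq : R = S + (lam⁻¹) ^ n • (R * T ^ n) := by
    rw [hS_eq]; abel
  have hSnorm : ‖S‖ ≤ n := by
    calc ‖S‖ ≤ ∑ k ∈ Finset.range n, ‖(lam⁻¹) ^ (k + 1) • T ^ k‖ :=
          norm_sum_le _ _
      _ ≤ ∑ k ∈ Finset.range n, 1 := by
          apply Finset.sum_le_sum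
          intro k _
          rw [norm_smul, norm_pow, hlaminv, one_pow, one_mul]
          rcases Nat.eq_zero_or_pos k with hk | hk
          · rw [hk, pow_zero, ContinuousLinearMap.one_def]
            exact ContinuousLinearMap.norm_id_le
          · calc ‖T ^ k‖ ≤ ‖T‖ ^ k := norm_pow_le' T hk
              _ ≤ 1 := pow_le_one₀ (norm_nonneg T) hT.le
      _ = n := by simp
  have hRnorm : ‖R‖ ≤ n + ‖R‖ * ‖T ^ n‖ := by
    calc ‖R‖ = ‖S + (lam⁻¹) ^ n • (R * T ^ n)‖ := by rw [← hR_eq]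
      _ ≤ ‖S‖ + ‖(lam⁻¹) ^ n • (R * T ^ n)‖ := norm_add_le _ _
      _ ≤ n + ‖R‖ * ‖T ^ n‖ := by
          gcongr
          rw [norm_smul, norm_pow, hlaminv, one_pow, one_mul]
          exact norm_mul_le _ _
  nlinarith [norm_nonneg R, norm_nonneg (T ^ n)]
end

section
/- For A ∈ SL(d, ℤ), the following are equivalent: (a) A has an eigenvalue which is a root of unity different from 1; (b) there exists a nonzero k ∈ ℤ^d and a positive integer n such that k + Ak + ... + A^{n-1}k = 0. -/
open Polynomial Matrix

private lemma eval_charpoly_aux (d : ℕ) (B : Matrix (Fin d) (Fin d) ℂ) (z : ℂ) :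
    (B.charpoly).eval z = (z • (1 : Matrix (Fin d) (Fin d) ℂ) - B).det := by
  rw [Matrix.charpoly, show eval z B.charmatrix.det = (evalRingHom z) B.charmatrix.det from rfl,
    RingHom.map_det]
  congr 1
  ext i j
  by_cases h : i = j <;> simp [h, charmatrix, Matrix.one_apply, Matrix.diagonal]

private lemma geom_eval_zero_iff (n : ℕ) (hn : 0 < n) (z : ℂ) :
    (∑ i ∈ Finset.range n, z ^ i) = 0 ↔ z ≠ 1 ∧ z ^ n = 1 := by
  constructor
  · intro h
    have hz : z ≠ 1 := by
      rintro rfl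
      simp only [one_pow, Finset.sum_const, Finset.card_range, nsmul_eq_mul, mul_one] at h
      exact hn.ne' ((Nat.cast_eq_zero (R := ℂ)).mp h)
    refine ⟨hz, ?_⟩
    rw [geom_sum_eq hz, _root_.div_eq_zero_iff] at h
    rcases h with h | h
    · linear_combination h
    · exact absurd (by linear_combination h) hz
  · rintro ⟨hz, hzn⟩
    rw [geom_sum_eq hz, _root_.div_eq_zero_iff]
    left; linear_combination hzn

private lemma det_list_prod_aux (d : ℕ) (l : List (Matrix (Fin d) (Fin d) ℂ)) :
    l.prod.det = (l.map Matrix.det).prod := by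
  induction l with
  | nil => simp
  | cons x xs ih => simp [det_mul, ih]

private lemma det_geom_sum_eq_zero_iff (d n : ℕ) (hn : 0 < n)
    (B : Matrix (Fin d) (Fin d) ℂ) :
    (∑ i ∈ Finset.range n, B ^ i).det = 0 ↔
      ∃ z : ℂ, (B.charpoly).eval z = 0 ∧ z ≠ 1 ∧ z ^ n = 1 := by
  set q : ℂ[X] := ∑ i ∈ Finset.range n, (X : ℂ[X]) ^ i with hq
  have hq0 : q ≠ 0 := by
    intro h
    have := congrArg (eval 1) h
    simp only [hq, eval_geom_sum, one_pow, Finset.sum_const, Finset.card_range, nsmul_eq_mul,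
      mul_one, eval_zero] at this
    exact hn.ne' ((Nat.cast_eq_zero (R := ℂ)).mp this)
  have haev : aeval B q = ∑ i ∈ Finset.range n, B ^ i := by
    simp [hq, map_sum]
  have hfact : q = C q.leadingCoeff * (q.roots.toList.map fun a => X - C a).prod := by
    have h1 : q = C q.leadingCoeff * (q.roots.map fun a => X - C a).prod :=
      (IsAlgClosed.splits q).eq_prod_roots
    have h2 : (q.roots.map fun a => X - C a).prod
        = (q.roots.toList.map fun a => X - C a).prod := by
      conv_lhs => rw [← q.roots.coe_toList]
      rw [Multiset.map_coe, Multiset.prod_coe]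
    rw [h2] at h1; exact h1
  have hdet : (∑ i ∈ Finset.range n, B ^ i).det =
      q.leadingCoeff ^ d * (q.roots.toList.map fun a => (B - a • 1).det).prod := by
    conv_lhs => rw [← haev, hfact]
    rw [_root_.map_mul, det_mul, aeval_C]
    congr 1
    · simp [Algebra.algebraMap_eq_smul_one, det_smul]
    · rw [map_list_prod (aeval B), det_list_prod_aux, List.map_map, List.map_map]
      congr 1
      simp [Function.comp_def, map_sub, Algebra.algebraMap_eq_smul_one]
  have hlc : q.leadingCoeff ≠ 0 := leadingCoeff_ne_zero.mpr hq0
  have hroot : ∀ x : ℂ, x ∈ q.roots ↔ (x ≠ 1 ∧ x ^ n = 1) := by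
    intro x
    rw [mem_roots hq0]
    show eval x q = 0 ↔ _
    simp only [hq, eval_geom_sum]
    exact geom_eval_zero_iff n hn x
  rw [hdet, mul_eq_zero]
  constructor
  · rintro (h | h)
    · exact absurd h (pow_ne_zero d hlc)
    · rw [List.prod_eq_zero_iff] at h
      obtain ⟨x, hx, hx0⟩ := List.mem_map.mp h
      refine ⟨x, ?_, (hroot x).mp (Multiset.mem_toList.mp hx)⟩
      rw [eval_charpoly_aux, ← neg_sub, det_neg, hx0, mul_zero]
  · rintro ⟨z, hz, hz1, hzn⟩
    right
    rw [List.prod_eq_zero_iff]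
    refine List.mem_map.mpr ⟨z, Multiset.mem_toList.mpr ((hroot z).mpr ⟨hz1, hzn⟩), ?_⟩

    rw [eval_charpoly_aux, ← neg_sub, det_neg] at hz
    rcases mul_eq_zero.mp hz with h | h
    · simp at h
    · exact h

private lemma sum_pow_mulVec (d n : ℕ) (A : Matrix (Fin d) (Fin d) ℤ) (k : Fin d → ℤ) :
    (∑ i ∈ Finset.range n, A ^ i).mulVec k = ∑ i ∈ Finset.range n, (A ^ i).mulVec k := by
  induction n with
  | zero => simp [Matrix.zero_mulVec]
  | succ m ih => rw [Finset.sum_range_succ, Finset.sum_range_succ, Matrix.add_mulVec, ih]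

/-- For `A ∈ SL(d,ℤ)` the following are equivalent: (a) `A` has an eigenvalue which
is a root of unity different from `1`; (b) there is a nonzero integer vector `k`
and a positive integer `n` with `k + Ak + ⋯ + A^{n-1}k = 0`. -/
theorem root_of_unity_ne_one_iff_telescoping_sum
    (d : ℕ) (A : Matrix (Fin d) (Fin d) ℤ) (hdet : A.det = 1 ∨ A.det = -1) :
    (∃ z ∈ (A.charpoly.map (algebraMap ℤ ℂ)).roots,
        z ≠ 1 ∧ ∃ n : ℕ, 0 < n ∧ z ^ n = 1) ↔
      (∃ k : Fin d → ℤ, k ≠ 0 ∧ ∃ n : ℕ, 0 < n ∧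
        (∑ i ∈ Finset.range n, (A ^ i).mulVec k) = 0) := by
  set B : Matrix (Fin d) (Fin d) ℂ := A.map (algebraMap ℤ ℂ) with hB
  have hcp : B.charpoly = A.charpoly.map (algebraMap ℤ ℂ) :=
    Matrix.charpoly_map A (algebraMap ℤ ℂ)
  have hcpne : A.charpoly.map (algebraMap ℤ ℂ) ≠ 0 :=
    ((A.charpoly_monic).map (algebraMap ℤ ℂ)).ne_zero
  -- the key bridge: determinant of the geometric sum over ℤ
  have key : ∀ n : ℕ, 0 < n →
      (((∑ i ∈ Finset.range n, A ^ i).det = 0) ↔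
        ∃ z : ℂ, (B.charpoly).eval z = 0 ∧ z ≠ 1 ∧ z ^ n = 1) := by
    intro n hn
    rw [← det_geom_sum_eq_zero_iff d n hn B]
    have hmap : (∑ i ∈ Finset.range n, B ^ i) =
        ((Int.castRingHom ℂ).mapMatrix (∑ i ∈ Finset.range n, A ^ i)) := by
      rw [map_sum]
      congr 1; ext i
      rw [map_pow]
      rfl
    rw [hmap, ← RingHom.map_det]
    simp only [Int.coe_castRingHom, Int.cast_eq_zero]
  constructor
  · rintro ⟨z, hzmem, hz1, n, hn, hzn⟩
    have hz : (B.charpoly).eval z = 0 := by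
      rw [hcp]
      exact (mem_roots hcpne).mp hzmem
    have hdet0 : (∑ i ∈ Finset.range n, A ^ i).det = 0 :=
      (key n hn).mpr ⟨z, hz, hz1, hzn⟩
    obtain ⟨k, hk, hmul⟩ := (Matrix.exists_mulVec_eq_zero_iff).mpr hdet0
    exact ⟨k, hk, n, hn, by rw [← sum_pow_mulVec]; exact hmul⟩
  · rintro ⟨k, hk, n, hn, hsum⟩
    have hdet0 : (∑ i ∈ Finset.range n, A ^ i).det = 0 :=
      Matrix.exists_mulVec_eq_zero_iff.mp ⟨k, hk, by rw [sum_pow_mulVec]; exact hsum⟩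
    obtain ⟨z, hz, hz1, hzn⟩ := (key n hn).mp hdet0
    refine ⟨z, ?_, hz1, n, hn, hzn⟩
    rw [mem_roots hcpne]
    show eval z (A.charpoly.map (algebraMap ℤ ℂ)) = 0
    rw [← hcp]; exact hz
end
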